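/- For any weighted graph G with positive node weights, every finite principal submatrix of the connection matrix M(k,G) is positive semidefinite. -/
import Mathlib


open scoped BigOperators Classical

/-- A `k`-labeled graph: a finite multigraph (no loops) with `k` distinct
nodes labeled `1, …, k`. -/
structure KGraph (k : ℕ) where
  V : Type
  [fV : Fintype V]
  [dV : DecidableEq V]
  lab : Fin k → V
  lab_inj : Function.Injective lab
  edges : Multiset (V × V)
  loopless : ∀ e ∈ edges, e.1 ≠ e.2

attribute [instance] KGraph.fV KGraph.dV

/-- The weighted partial homomorphism number `hom_φ(F, G)`, for a weighted graph `G`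
on node set `W` with node weights `α` and edge weights `β`. -/
noncomputable def homPhi {k : ℕ} {W : Type} [Fintype W] [DecidableEq W]
    (α : W → ℝ) (β : W → W → ℝ) (F : KGraph k) (φ : Fin k → W) : ℝ :=
  ∑ ψ ∈ Finset.univ.filter (fun ψ : F.V → W => ψ ∘ F.lab = φ),
    ((∏ u, α (ψ u)) / ∏ i, α (φ i)) *
      (F.edges.map (fun e => β (ψ e.1) (ψ e.2))).prod

/-- The full weighted homomorphism number `hom(F, G)` (labels ignored). -/
noncomputable def homT {k : ℕ} {W : Type} [Fintype W] [DecidableEq W]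
    (α : W → ℝ) (β : W → W → ℝ) (F : KGraph k) : ℝ :=
  ∑ ψ : F.V → W, (∏ u, α (ψ u)) * (F.edges.map (fun e => β (ψ e.1) (ψ e.2))).prod

/-- Embedding of the vertices of `F₂` into the gluing product `F₁F₂`. -/
noncomputable def KGraph.emb {k : ℕ} (F₁ F₂ : KGraph k) (v : F₂.V) :
    F₁.V ⊕ {v : F₂.V // v ∉ Set.range F₂.lab} :=
  if h : v ∈ Set.range F₂.lab then
    Sum.inl (F₁.lab ((Equiv.ofInjective F₂.lab F₂.lab_inj).symm ⟨v, h⟩))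
  else Sum.inr ⟨v, h⟩

theorem KGraph.emb_inj {k : ℕ} (F₁ F₂ : KGraph k) :
    Function.Injective (KGraph.emb F₁ F₂) := by
  intro a b hab
  by_cases h1 : a ∈ Set.range F₂.lab <;> by_cases h2 : b ∈ Set.range F₂.lab
  · rw [KGraph.emb, dif_pos h1, KGraph.emb, dif_pos h2] at hab
    have h3 := F₁.lab_inj (Sum.inl.inj hab)
    have h4 := (Equiv.ofInjective F₂.lab F₂.lab_inj).symm.injective h3
    simpa using congrArg Subtype.val h4
  · rw [KGraph.emb, dif_pos h1, KGraph.emb, dif_neg h2] at hab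
    exact absurd hab (by simp)
  · rw [KGraph.emb, dif_neg h1, KGraph.emb, dif_pos h2] at hab
    exact absurd hab (by simp)
  · rw [KGraph.emb, dif_neg h1, KGraph.emb, dif_neg h2] at hab
    simpa using Sum.inr.inj hab

/-- The gluing product `F₁F₂` of two `k`-labeled graphs: take the disjoint union
and identify equally-labeled nodes. -/
noncomputable def glue {k : ℕ} (F₁ F₂ : KGraph k) : KGraph k where
  V := F₁.V ⊕ {v : F₂.V // v ∉ Set.range F₂.lab}
  lab := fun i => Sum.inl (F₁.lab i)
  lab_inj := Sum.inl_injective.comp F₁.lab_inj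
  edges := F₁.edges.map (fun e => (Sum.inl e.1, Sum.inl e.2)) +
    F₂.edges.map (fun e => (KGraph.emb F₁ F₂ e.1, KGraph.emb F₁ F₂ e.2))
  loopless := by
    intro e he
    simp only [Multiset.mem_add, Multiset.mem_map] at he
    rcases he with ⟨a, ha, rfl⟩ | ⟨a, ha, rfl⟩
    · simpa using F₁.loopless a ha
    · exact fun h => F₂.loopless a ha (KGraph.emb_inj F₁ F₂ h)

/-- `σ` is an automorphism of the weighted graph given by `(α, β)`. -/
def IsAut {W : Type} (α : W → ℝ) (β : W → W → ℝ) (σ : Equiv.Perm W) : Prop :=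
  (∀ v, α (σ v) = α v) ∧ ∀ u v, β (σ u) (σ v) = β u v

/-- The number of orbits of `Aut(G)` acting coordinatewise on `V(G)^k`. -/
noncomputable def orbCount {W : Type} [Fintype W] (α : W → ℝ) (β : W → W → ℝ)
    (k : ℕ) : ℕ :=
  Nat.card (Quot (fun φ ψ : Fin k → W =>
    ∃ σ : Equiv.Perm W, IsAut α β σ ∧ ψ = σ ∘ φ))


noncomputable def KGraph.split {k : ℕ} (F : KGraph k) :
    F.V ≃ (Fin k ⊕ {v : F.V // v ∉ Set.range F.lab}) where
  toFun v := if h : v ∈ Set.range F.lab then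
      Sum.inl ((Equiv.ofInjective F.lab F.lab_inj).symm ⟨v, h⟩)
    else Sum.inr ⟨v, h⟩
  invFun := Sum.elim F.lab Subtype.val
  left_inv v := by
    by_cases h : v ∈ Set.range F.lab
    · simp [h, Equiv.apply_ofInjective_symm]
    · simp [h]
  right_inv x := by
    cases x with
    | inl i =>
      have h : F.lab i ∈ Set.range F.lab := ⟨i, rfl⟩
      simp [h, Equiv.ofInjective_symm_apply]
    | inr s => simp [s.2]

lemma KGraph.split_lab {k : ℕ} (F : KGraph k) (i : Fin k) :
    F.split (F.lab i) = Sum.inl i := by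
  have h : F.lab i = F.split.symm (Sum.inl i) := rfl
  rw [h, Equiv.apply_symm_apply]

lemma KGraph.split_val {k : ℕ} (F : KGraph k)
    (s : {v : F.V // v ∉ Set.range F.lab}) : F.split s.val = Sum.inr s := by
  have h : (s : F.V) = F.split.symm (Sum.inr s) := rfl
  rw [h, Equiv.apply_symm_apply]

lemma KGraph.emb_eq {k : ℕ} (F₁ F₂ : KGraph k) (v : F₂.V) :
    KGraph.emb F₁ F₂ v = Sum.map F₁.lab id (F₂.split v) := by
  unfold KGraph.emb KGraph.split
  by_cases h : v ∈ Set.range F₂.lab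
  · have h' : ∃ y, F₂.lab y = v := h
    simp only [Equiv.coe_fn_mk, dif_pos h, dif_pos h']
    rfl
  · have h' : ¬∃ y, F₂.lab y = v := h
    simp only [Equiv.coe_fn_mk, dif_neg h, dif_neg h']
    rfl

lemma elim_split {k : ℕ} {W : Type} (F : KGraph k) (φ : Fin k → W)
    (ψ : F.V → W) (hψ : ψ ∘ F.lab = φ) (v : F.V) :
    Sum.elim φ (fun s => ψ s.val) (F.split v) = ψ v := by
  have hv := F.split.symm_apply_apply v
  rcases h : F.split v with i | s
  · rw [h] at hv
    have hv' : F.lab i = v := hv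
    simp only [Sum.elim_inl, ← hψ, ← hv']
    rfl
  · rw [h] at hv
    have hv' : (s : F.V) = v := hv
    simp [← hv']

lemma homPhi_eq {k m : ℕ} (α : Fin m → ℝ) (β : Fin m → Fin m → ℝ)
    (hα : ∀ i, 0 < α i) (F : KGraph k) (φ : Fin k → Fin m) :
    homPhi α β F φ = ∑ g : {v : F.V // v ∉ Set.range F.lab} → Fin m,
      (∏ s, α (g s)) *
        (F.edges.map (fun e => β (Sum.elim φ g (F.split e.1))
          (Sum.elim φ g (F.split e.2)))).prod := by
  classical
  have hc : (0:ℝ) < ∏ i, α (φ i) := Finset.prod_pos fun i _ => hα _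
  rw [homPhi]
  refine Finset.sum_nbij' (fun ψ => fun s => ψ s.val)
    (fun g => fun v => Sum.elim φ g (F.split v))
    (fun ψ _ => Finset.mem_univ _) (fun g _ => ?_) (fun ψ hψ => ?_)
    (fun g _ => ?_) (fun ψ hψ => ?_)
  · simp only [Finset.mem_filter, Finset.mem_univ, true_and]
    funext i
    simp [Function.comp, KGraph.split_lab]
  · simp only [Finset.mem_filter, Finset.mem_univ, true_and] at hψ
    funext v
    exact elim_split F φ ψ hψ v
  · funext s
    simp [KGraph.split_val]
  · simp only [Finset.mem_filter, Finset.mem_univ, true_and] at hψ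
    have he := elim_split F φ ψ hψ
    have hprod : (∏ u, α (ψ u)) = (∏ i, α (φ i)) *
        ∏ s : {v : F.V // v ∉ Set.range F.lab}, α (ψ s.val) := by
      rw [← Equiv.prod_comp F.split.symm (fun u => α (ψ u)),
        Fintype.prod_sum_type]
      congr 1
      refine Finset.prod_congr rfl fun i _ => ?_
      rw [← hψ]; rfl
    rw [hprod, mul_div_cancel_left₀ _ hc.ne']
    simp only [he]

lemma homT_glue {k m : ℕ} (α : Fin m → ℝ) (β : Fin m → Fin m → ℝ)
    (hα : ∀ i, 0 < α i) (F₁ F₂ : KGraph k) :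
    homT α β (glue F₁ F₂) = ∑ φ : Fin k → Fin m,
      (∏ i, α (φ i)) * (homPhi α β F₁ φ * homPhi α β F₂ φ) := by
  classical
  set S := {v : F₂.V // v ∉ Set.range F₂.lab}
  have key : ∀ (ψ₁ : F₁.V → Fin m) (g : S → Fin m),
      (∏ u, α (Sum.elim ψ₁ g u)) *
        (((glue F₁ F₂).edges).map
          (fun e => β (Sum.elim ψ₁ g e.1) (Sum.elim ψ₁ g e.2))).prod =
      ((∏ u, α (ψ₁ u)) *
        (F₁.edges.map (fun e => β (ψ₁ e.1) (ψ₁ e.2))).prod) *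
      ((∏ s, α (g s)) *
        (F₂.edges.map (fun e =>
          β (Sum.elim (ψ₁ ∘ F₁.lab) g (F₂.split e.1))
            (Sum.elim (ψ₁ ∘ F₁.lab) g (F₂.split e.2)))).prod) := by
    intro ψ₁ g
    have hemb : ∀ v : F₂.V, Sum.elim ψ₁ g (KGraph.emb F₁ F₂ v) =
        Sum.elim (ψ₁ ∘ F₁.lab) g (F₂.split v) := by
      intro v
      rw [KGraph.emb_eq]
      rcases F₂.split v with i | s <;> simp
    have hV : (∏ u, α (Sum.elim ψ₁ g u)) =
        (∏ u, α (ψ₁ u)) * ∏ s, α (g s) :=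
      Fintype.prod_sum_type (fun u => α (Sum.elim ψ₁ g u))
    have hE : (((glue F₁ F₂).edges).map
          (fun e => β (Sum.elim ψ₁ g e.1) (Sum.elim ψ₁ g e.2))).prod =
        (F₁.edges.map (fun e => β (ψ₁ e.1) (ψ₁ e.2))).prod *
        (F₂.edges.map (fun e =>
          β (Sum.elim (ψ₁ ∘ F₁.lab) g (F₂.split e.1))
            (Sum.elim (ψ₁ ∘ F₁.lab) g (F₂.split e.2)))).prod := by
      show ((F₁.edges.map (fun e : F₁.V × F₁.V =>
            ((Sum.inl e.1 : F₁.V ⊕ S), (Sum.inl e.2 : F₁.V ⊕ S))) +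
          F₂.edges.map (fun e : F₂.V × F₂.V =>
            (KGraph.emb F₁ F₂ e.1, KGraph.emb F₁ F₂ e.2))).map
          (fun e : (F₁.V ⊕ S) × (F₁.V ⊕ S) =>
            β (Sum.elim ψ₁ g e.1) (Sum.elim ψ₁ g e.2))).prod = _
      rw [Multiset.map_add, Multiset.prod_add, Multiset.map_map, Multiset.map_map]
      have h1 : ((fun e : (F₁.V ⊕ S) × (F₁.V ⊕ S) =>
            β (Sum.elim ψ₁ g e.1) (Sum.elim ψ₁ g e.2)) ∘
          (fun e : F₂.V × F₂.V =>
            (KGraph.emb F₁ F₂ e.1, KGraph.emb F₁ F₂ e.2))) =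
          fun e : F₂.V × F₂.V =>
            β (Sum.elim (ψ₁ ∘ F₁.lab) g (F₂.split e.1))
              (Sum.elim (ψ₁ ∘ F₁.lab) g (F₂.split e.2)) := by
        funext e
        simp only [Function.comp_apply, hemb]
      rw [h1]
      rfl
    rw [hV, hE]; ring
  have e1 : homT α β (glue F₁ F₂) =
      ∑ ψ₁ : F₁.V → Fin m, ∑ g : S → Fin m,
        ((∏ u, α (ψ₁ u)) *
          (F₁.edges.map (fun e => β (ψ₁ e.1) (ψ₁ e.2))).prod) *
        ((∏ s, α (g s)) *
          (F₂.edges.map (fun e =>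
            β (Sum.elim (ψ₁ ∘ F₁.lab) g (F₂.split e.1))
              (Sum.elim (ψ₁ ∘ F₁.lab) g (F₂.split e.2)))).prod) := by
    show (∑ ψ : F₁.V ⊕ S → Fin m, (∏ u, α (ψ u)) *
        (((glue F₁ F₂).edges).map (fun e => β (ψ e.1) (ψ e.2))).prod) = _
    rw [← Equiv.sum_comp (Equiv.sumArrowEquivProdArrow F₁.V S (Fin m)).symm
      (fun ψ : F₁.V ⊕ S → Fin m => (∏ u, α (ψ u)) *
        (((glue F₁ F₂).edges).map (fun e => β (ψ e.1) (ψ e.2))).prod)]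
    rw [Fintype.sum_prod_type]
    refine Finset.sum_congr rfl fun ψ₁ _ => Finset.sum_congr rfl fun g _ => ?_
    have hsymm : (Equiv.sumArrowEquivProdArrow F₁.V S (Fin m)).symm (ψ₁, g) =
        Sum.elim ψ₁ g := by
      funext x; cases x <;> rfl
    rw [hsymm, key]
  rw [e1]
  have e2 : ∀ φ : Fin k → Fin m,
      (∏ i, α (φ i)) * (homPhi α β F₁ φ * homPhi α β F₂ φ) =
      ∑ ψ₁ ∈ Finset.univ.filter (fun ψ₁ : F₁.V → Fin m => ψ₁ ∘ F₁.lab = φ),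
        ∑ g : S → Fin m,
        ((∏ u, α (ψ₁ u)) *
          (F₁.edges.map (fun e => β (ψ₁ e.1) (ψ₁ e.2))).prod) *
        ((∏ s, α (g s)) *
          (F₂.edges.map (fun e =>
            β (Sum.elim φ g (F₂.split e.1))
              (Sum.elim φ g (F₂.split e.2)))).prod) := by
    intro φ
    have hc : (0:ℝ) < ∏ i, α (φ i) := Finset.prod_pos fun i _ => hα _
    rw [homPhi_eq α β hα F₂ φ, homPhi, Finset.sum_mul_sum, Finset.mul_sum]
    refine Finset.sum_congr rfl fun ψ₁ _ => ?_
    rw [Finset.mul_sum]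
    refine Finset.sum_congr rfl fun g _ => ?_
    field_simp
    try ring
  calc ∑ ψ₁ : F₁.V → Fin m, ∑ g : S → Fin m,
        ((∏ u, α (ψ₁ u)) *
          (F₁.edges.map (fun e => β (ψ₁ e.1) (ψ₁ e.2))).prod) *
        ((∏ s, α (g s)) *
          (F₂.edges.map (fun e =>
            β (Sum.elim (ψ₁ ∘ F₁.lab) g (F₂.split e.1))
              (Sum.elim (ψ₁ ∘ F₁.lab) g (F₂.split e.2)))).prod)
      = ∑ φ : Fin k → Fin m,
        ∑ ψ₁ ∈ Finset.univ.filter (fun ψ₁ : F₁.V → Fin m => ψ₁ ∘ F₁.lab = φ),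
        ∑ g : S → Fin m,
        ((∏ u, α (ψ₁ u)) *
          (F₁.edges.map (fun e => β (ψ₁ e.1) (ψ₁ e.2))).prod) *
        ((∏ s, α (g s)) *
          (F₂.edges.map (fun e =>
            β (Sum.elim φ g (F₂.split e.1))
              (Sum.elim φ g (F₂.split e.2)))).prod) := by
        rw [← Finset.sum_fiberwise Finset.univ
          (fun ψ₁ : F₁.V → Fin m => ψ₁ ∘ F₁.lab) _]
        refine Finset.sum_congr rfl fun φ _ => Finset.sum_congr rfl fun ψ₁ hψ₁ => ?_
        simp only [Finset.mem_filter, Finset.mem_univ, true_and] at hψ₁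
        rw [hψ₁]
    _ = _ := by
        refine Finset.sum_congr rfl fun φ _ => ?_
        rw [e2 φ]

/-- every finite principal submatrix of the connection matrix `M(k,G)`
is positive semidefinite. -/
theorem connection_matrix_posSemidef {m k : ℕ} (α : Fin m → ℝ) (β : Fin m → Fin m → ℝ)
    (hα : ∀ i, 0 < α i) (hβ : ∀ i j, β i j = β j i)
    (ι : Type) [Fintype ι] (Fs : ι → KGraph k) :
    Matrix.PosSemidef (Matrix.of fun i j : ι => homT α β (glue (Fs i) (Fs j))) := by
  classical
  have hM : (Matrix.of fun i j : ι => homT α β (glue (Fs i) (Fs j))) =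
      (Matrix.of fun (i : ι) (φ : Fin k → Fin m) =>
        Real.sqrt (∏ j, α (φ j)) * homPhi α β (Fs i) φ) *
      (Matrix.of fun (i : ι) (φ : Fin k → Fin m) =>
        Real.sqrt (∏ j, α (φ j)) * homPhi α β (Fs i) φ).conjTranspose := by
    ext i j
    rw [Matrix.mul_apply]
    simp only [Matrix.of_apply, Matrix.conjTranspose_apply, star_trivial]
    rw [homT_glue α β hα (Fs i) (Fs j)]
    refine Finset.sum_congr rfl fun φ _ => ?_
    have h0 : (0:ℝ) ≤ ∏ j, α (φ j) := (Finset.prod_pos fun j _ => hα _).le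
    conv_lhs => rw [← Real.mul_self_sqrt h0]
    ring
  rw [hM]
  exact Matrix.posSemidef_self_mul_conjTranspose _
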